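/- Let r ≥ 2 and d ≥ 1 be integers and let (d_1, …, d_r) be an r-tuple of nonnegative integers that is Tverberg prescribable for r and d. Then r·d_i ≥ (r−1)(d−1) for every i ∈ {1, …, r}. -/

import Mathlib

set_option linter.unusedSectionVars false
set_option linter.unnecessarySimpa false
open Submodule Module



variable {E : Type*} [AddCommGroup E] [Module ℝ E] [FiniteDimensional ℝ E]

lemma aux_finrank_grow (U Z : Submodule ℝ E) (c : E) :
    finrank ℝ ↥((U ⊔ span ℝ {c}) ⊓ Z) ≤ finrank ℝ ↥(U ⊓ Z) + 1 := by
  classical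
  set P := (U ⊔ span ℝ {c}) ⊓ Z with hP
  let φ : P →ₗ[ℝ] E ⧸ U := U.mkQ.comp P.subtype
  have hrn := LinearMap.finrank_range_add_finrank_ker φ
  have hker : LinearMap.ker φ = comap P.subtype (U ⊓ P) := by
    ext x
    simp [φ, LinearMap.mem_ker, Submodule.mem_comap, x.2]
  have hkereq : finrank ℝ ↥(LinearMap.ker φ) = finrank ℝ ↥(U ⊓ P) := by
    rw [hker]
    exact LinearEquiv.finrank_eq (Submodule.comapSubtypeEquivOfLe inf_le_right)
  have hUP : U ⊓ P = U ⊓ Z := by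
    rw [hP, ← inf_assoc, (inf_eq_left.2 (le_sup_left : U ≤ U ⊔ span ℝ {c}))]
  have hrange : finrank ℝ ↥(LinearMap.range φ) ≤ 1 := by
    have h1 : LinearMap.range φ ≤ span ℝ {U.mkQ c} := by
      rintro y ⟨⟨x, hx⟩, rfl⟩
      obtain ⟨u, hu, w, hw, rfl⟩ := Submodule.mem_sup.1 hx.1
      obtain ⟨t, rfl⟩ := Submodule.mem_span_singleton.1 hw
      have : φ ⟨u + t • c, hx⟩ = t • U.mkQ c := by
        simp only [φ, LinearMap.comp_apply, Submodule.subtype_apply, map_add, map_smul]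
        rw [Submodule.mkQ_apply, (Submodule.Quotient.mk_eq_zero U).2 hu, zero_add]
      rw [this]
      exact Submodule.smul_mem _ _ (Submodule.mem_span_singleton_self _)
    calc finrank ℝ ↥(LinearMap.range φ) ≤ finrank ℝ ↥(span ℝ ({U.mkQ c} : Set (E ⧸ U))) :=
          Submodule.finrank_mono h1
      _ ≤ 1 := by
          rcases eq_or_ne (U.mkQ c) 0 with h0 | h0
          · rw [h0, Submodule.span_zero_singleton]
            simp
          · rw [finrank_span_singleton h0]
  calc finrank ℝ ↥P = finrank ℝ ↥(LinearMap.range φ) + finrank ℝ ↥(LinearMap.ker φ) := hrn.symm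
    _ ≤ 1 + finrank ℝ ↥(U ⊓ Z) := by rw [hkereq, hUP]; omega
    _ = finrank ℝ ↥(U ⊓ Z) + 1 := by omega

lemma aux_inf_bot (U Z : Submodule ℝ E) (c : E) (hUZ : U ⊓ Z = ⊥) (hc : c ∉ U ⊔ Z) :
    (U ⊔ span ℝ {c}) ⊓ Z = ⊥ := by
  rw [eq_bot_iff]
  rintro z ⟨hz1, hz2⟩
  obtain ⟨u, hu, w, hw, rfl⟩ := Submodule.mem_sup.1 hz1
  obtain ⟨t, rfl⟩ := Submodule.mem_span_singleton.1 hw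
  rcases eq_or_ne t 0 with rfl | ht
  · rw [zero_smul, add_zero] at hz2 ⊢
    rw [← hUZ]; exact ⟨hu, hz2⟩
  · exfalso
    apply hc
    have : c = t⁻¹ • (u + t • c) + (-t⁻¹) • u := by
      rw [smul_add, smul_smul, inv_mul_cancel₀ ht, one_smul]
      module
    rw [this]
    exact Submodule.add_mem _
      (Submodule.smul_mem _ _ (Submodule.mem_sup_right hz2))
      (Submodule.smul_mem _ _ (Submodule.mem_sup_left hu))

lemma aux_exists_not_mem {M : ℕ} (s : Set (Submodule ℝ (Fin M → ℝ))) (hs : s.Finite)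
    (hp : ∀ p ∈ s, p ≠ ⊤) : ∃ c : Fin M → ℝ, ∀ p ∈ s, c ∉ p := by
  by_contra hcon
  push_neg at hcon
  have hcover : (⋃ p : s, (p : Set (Fin M → ℝ))) = Set.univ := by
    ext c
    simp only [Set.mem_iUnion, Set.mem_univ, iff_true]
    obtain ⟨p, hp1, hp2⟩ := hcon c
    exact ⟨⟨p, hp1⟩, hp2⟩
  have : Countable s := (Set.Finite.countable hs).to_subtype
  obtain ⟨p, hpint⟩ := nonempty_interior_of_iUnion_of_closed
    (fun p : s => (p : Submodule ℝ (Fin M → ℝ)).closed_of_finiteDimensional) hcover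
  exact hp p p.2 (Submodule.eq_top_of_nonempty_interior' _ hpint)

lemma aux_generic (M : ℕ) [NeZero M] {V : Type*} [Fintype V] [DecidableEq V] (W : Finset V) :
    ∃ q : V → (Fin M → ℝ),
      (∀ v, q v 0 = 1) ∧
      ∀ 𝒯 : Finset (Finset V), 𝒯.Nonempty → (∀ T ∈ 𝒯, T.Nonempty) → (∀ T ∈ 𝒯, T ⊆ W) →
        ((𝒯 : Set (Finset V)).Pairwise fun T T' => Disjoint T T') →
        finrank ℝ ↥(𝒯.inf fun T => span ℝ (q '' ↑T)) ≤
          (∑ T ∈ 𝒯, T.card) - (𝒯.card - 1) * M := by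
  classical
  induction W using Finset.induction_on with
  | empty =>
    refine ⟨fun _ _ => 1, fun _ => rfl, ?_⟩
    intro 𝒯 h𝒯ne hTne hTsub _
    obtain ⟨T, hT⟩ := h𝒯ne
    obtain ⟨v, hv⟩ := hTne T hT
    exact absurd (hTsub T hT hv) (Finset.notMem_empty v)
  | @insert a W ha ih =>
    obtain ⟨q, hq1, hq2⟩ := ih
    set ZS : Finset (Finset V) → Submodule ℝ (Fin M → ℝ) :=
      fun 𝒮 => 𝒮.inf fun T => span ℝ (q '' ↑T) with hZS
    set badset : Set (Submodule ℝ (Fin M → ℝ)) :=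
      insert (LinearMap.ker (LinearMap.proj 0 : (Fin M → ℝ) →ₗ[ℝ] ℝ))
        { p | ∃ A : Finset V, ∃ 𝒮 : Finset (Finset V),
            p = span ℝ (q '' ↑A) ⊔ ZS 𝒮 ∧ A ⊆ W ∧ 𝒮.Nonempty ∧
            (∀ T ∈ 𝒮, T.Nonempty ∧ T ⊆ W ∧ Disjoint A T) ∧
            ((𝒮 : Set (Finset V)).Pairwise fun T T' => Disjoint T T') ∧
            ZS 𝒮 ≠ ⊥ ∧ A.card + (∑ T ∈ 𝒮, T.card) + 1 ≤ 𝒮.card * M } with hbadset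
    have hfin : badset.Finite := by
      apply Set.Finite.subset (Set.Finite.insert _ (Set.finite_range
        (fun pr : Finset V × Finset (Finset V) => span ℝ (q '' ↑pr.1) ⊔ ZS pr.2)))
      rintro p (rfl | ⟨A, 𝒮, rfl, -⟩)
      · exact Set.mem_insert _ _
      · exact Set.mem_insert_of_mem _ ⟨(A, 𝒮), rfl⟩
    have hproper : ∀ p ∈ badset, p ≠ ⊤ := by
      rintro p (rfl | ⟨A, 𝒮, rfl, hAW, h𝒮ne, h𝒮, hdisj𝒮, hZbot, hsum⟩)
      · intro htop
        have h1 : (fun _ => (1:ℝ)) ∈ LinearMap.ker (LinearMap.proj 0 : (Fin M → ℝ) →ₗ[ℝ] ℝ) := by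
          rw [htop]; trivial
        simpa using h1
      · intro htop
        have hU : finrank ℝ ↥(span ℝ (q '' ↑A)) ≤ A.card := by
          rw [show q '' ↑A = ↑(A.image q) from (Finset.coe_image).symm]
          exact (finrank_span_finset_le_card (A.image q)).trans (Finset.card_image_le)
        have hZ : finrank ℝ ↥(ZS 𝒮) ≤ (∑ T ∈ 𝒮, T.card) - (𝒮.card - 1) * M :=
          hq2 𝒮 h𝒮ne (fun T hT => (h𝒮 T hT).1) (fun T hT => (h𝒮 T hT).2.1) hdisj𝒮
        have hZ1 : 1 ≤ finrank ℝ ↥(ZS 𝒮) := by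
          rcases Nat.eq_zero_or_pos (finrank ℝ ↥(ZS 𝒮)) with h0 | h0
          · exact absurd (Submodule.finrank_eq_zero.1 h0) hZbot
          · exact h0
        have hle : finrank ℝ ↥(span ℝ (q '' ↑A) ⊔ ZS 𝒮) ≤
            finrank ℝ ↥(span ℝ (q '' ↑A)) + finrank ℝ ↥(ZS 𝒮) :=
          Submodule.finrank_add_le_finrank_add_finrank _ _
        have htopr : finrank ℝ ↥(span ℝ (q '' ↑A) ⊔ ZS 𝒮) = M := by
          rw [htop, finrank_top, Module.finrank_pi]
          simp
        obtain ⟨cs, hcs⟩ : ∃ cs, 𝒮.card = cs + 1 :=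
          ⟨𝒮.card - 1, (Nat.succ_pred_eq_of_pos (Finset.card_pos.2 h𝒮ne)).symm⟩
        rw [hcs] at hZ hsum
        have e1 : (cs + 1 - 1) * M = cs * M := by simp
        have e2 : (cs + 1) * M = cs * M + M := by ring
        rw [e1] at hZ
        rw [e2] at hsum
        generalize cs * M = t at hZ hsum
        omega
    obtain ⟨c₀, hc₀⟩ := aux_exists_not_mem badset hfin hproper
    have hc₀0 : c₀ 0 ≠ 0 := by
      intro h0
      exact hc₀ _ (Set.mem_insert _ _) h0
    set c : Fin M → ℝ := (c₀ 0)⁻¹ • c₀ with hc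
    have hc0 : c 0 = 1 := by
      simp [hc, inv_mul_cancel₀ hc₀0]
    have hcnot : ∀ p ∈ badset, c ∉ p := by
      intro p hp hcp
      apply hc₀ p hp
      have : c₀ = (c₀ 0) • c := by
        rw [hc, smul_smul, mul_inv_cancel₀ hc₀0, one_smul]
      rw [this]
      exact Submodule.smul_mem _ _ hcp
    set q' : V → (Fin M → ℝ) := Function.update q a c with hq'
    have himg : ∀ T : Finset V, T ⊆ W → q' '' ↑T = q '' ↑T := by
      intro T hTW
      apply Set.image_congr
      intro v hv
      exact Function.update_of_ne (fun hva => ha (by rw [← hva]; exact hTW hv)) _ _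
    refine ⟨q', ?_, ?_⟩
    · intro v
      rcases eq_or_ne v a with rfl | hva
      · rw [hq', Function.update_self]; exact hc0
      · rw [hq', Function.update_of_ne hva]; exact hq1 v
    intro 𝒯 h𝒯ne hTne hTsub hdisj
    by_cases ha𝒯 : ∀ T ∈ 𝒯, a ∉ T
    · have hsub' : ∀ T ∈ 𝒯, T ⊆ W := by
        intro T hT v hv
        rcases Finset.mem_insert.1 (hTsub T hT hv) with rfl | hvW
        · exact absurd hv (ha𝒯 T hT)
        · exact hvW
      have : (𝒯.inf fun T => span ℝ (q' '' ↑T)) = 𝒯.inf fun T => span ℝ (q '' ↑T) :=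
        Finset.inf_congr rfl (fun T hT => by rw [himg T (hsub' T hT)])
      rw [this]
      exact hq2 𝒯 h𝒯ne hTne hsub' hdisj
    · push_neg at ha𝒯
      obtain ⟨T0, hT0𝒯, haT0⟩ := ha𝒯
      set A := T0.erase a with hA
      set 𝒮 := 𝒯.erase T0 with h𝒮def
      have haA : a ∉ A := Finset.notMem_erase _ _
      have hAW : A ⊆ W := by
        intro v hv
        rcases Finset.mem_insert.1 (hTsub T0 hT0𝒯 (Finset.mem_of_mem_erase hv)) with rfl | hvW
        · exact absurd rfl (Finset.ne_of_mem_erase hv)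
        · exact hvW
      have h𝒮facts : ∀ T ∈ 𝒮, T.Nonempty ∧ T ⊆ W ∧ Disjoint A T := by
        intro T hT
        have hT𝒯 := Finset.mem_of_mem_erase hT
        have hTT0 : T ≠ T0 := Finset.ne_of_mem_erase hT
        have hdTT0 : Disjoint T T0 := hdisj hT𝒯 hT0𝒯 hTT0
        have haT : a ∉ T := fun haT => (Finset.disjoint_left.1 hdTT0) haT haT0
        refine ⟨hTne T hT𝒯, ?_, ?_⟩
        · intro v hv
          rcases Finset.mem_insert.1 (hTsub T hT𝒯 hv) with rfl | hvW
          · exact absurd hv haT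
          · exact hvW
        · exact (hdTT0.mono_right (Finset.erase_subset _ _)).symm
      have hdisj𝒮 : ((𝒮 : Set (Finset V)).Pairwise fun T T' => Disjoint T T') :=
        hdisj.mono (Finset.coe_subset.2 (Finset.erase_subset _ _))
      have h𝒯eq : 𝒯 = insert T0 𝒮 := (Finset.insert_erase hT0𝒯).symm
      have hT0A : T0 = insert a A := (Finset.insert_erase haT0).symm
      have hT0nS : T0 ∉ 𝒮 := Finset.notMem_erase _ _
      have hT0card : T0.card = A.card + 1 := by
        rw [hT0A, Finset.card_insert_of_notMem haA]
      set U := span ℝ (q '' ↑A) with hU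
      have hfT0 : span ℝ (q' '' ↑T0) = U ⊔ span ℝ {c} := by
        rw [hT0A, Finset.coe_insert, Set.image_insert_eq]
        rw [show q' a = c from Function.update_self a c q]
        rw [himg A hAW, Submodule.span_insert, sup_comm]
      have hZeq : (𝒮.inf fun T => span ℝ (q' '' ↑T)) = ZS 𝒮 :=
        Finset.inf_congr rfl (fun T hT => by rw [himg T (h𝒮facts T hT).2.1])
      have hinf : (𝒯.inf fun T => span ℝ (q' '' ↑T)) = (U ⊔ span ℝ {c}) ⊓ ZS 𝒮 := by
        rw [h𝒯eq, Finset.inf_insert, hfT0, hZeq]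
      have hcard𝒯 : 𝒯.card = 𝒮.card + 1 := by
        rw [h𝒯eq, Finset.card_insert_of_notMem hT0nS]
      have hsum𝒯 : ∑ T ∈ 𝒯, T.card = A.card + 1 + ∑ T ∈ 𝒮, T.card := by
        rw [h𝒯eq, Finset.sum_insert hT0nS, hT0card]
      rw [hinf, hsum𝒯, hcard𝒯]
      have e1 : 𝒮.card + 1 - 1 = 𝒮.card := by omega
      rw [e1]
      rcases Finset.eq_empty_or_nonempty 𝒮 with h𝒮e | h𝒮ne
      · rw [h𝒮e]
        have hZtop : ZS ∅ = ⊤ := Finset.inf_empty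
        rw [hZtop, inf_top_eq]
        simp only [Finset.card_empty, Finset.sum_empty, zero_mul, Nat.sub_zero, add_zero]
        calc finrank ℝ ↥(U ⊔ span ℝ {c}) ≤ finrank ℝ ↥U + finrank ℝ ↥(span ℝ ({c} : Set (Fin M → ℝ))) :=
              Submodule.finrank_add_le_finrank_add_finrank _ _
          _ ≤ A.card + 1 := by
              have hU' : finrank ℝ ↥U ≤ A.card := by
                rw [hU, show q '' ↑A = ↑(A.image q) from (Finset.coe_image).symm]
                exact (finrank_span_finset_le_card (A.image q)).trans (Finset.card_image_le)
              have hc1 : finrank ℝ ↥(span ℝ ({c} : Set (Fin M → ℝ))) ≤ 1 := by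
                rcases eq_or_ne c 0 with hce | hcne
                · rw [hce, Submodule.span_zero_singleton]; simp
                · rw [finrank_span_singleton hcne]
              omega
      · have hUZ : finrank ℝ ↥(U ⊓ ZS 𝒮) ≤ (A.card + ∑ T ∈ 𝒮, T.card) - 𝒮.card * M := by
          rcases Finset.eq_empty_or_nonempty A with hAe | hAne
          · have hUb : U = ⊥ := by rw [hU, hAe]; simp
            rw [hUb, bot_inf_eq, finrank_bot]
            exact Nat.zero_le _
          · have hAnS : A ∉ 𝒮 := by
              intro hA𝒮
              have := (h𝒮facts A hA𝒮).2.2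
              rw [Finset.disjoint_self_iff_empty] at this
              exact hAne.ne_empty this
            have happ := hq2 (insert A 𝒮) (Finset.insert_nonempty _ _) ?_ ?_ ?_
            · rw [Finset.inf_insert] at happ
              rw [Finset.card_insert_of_notMem hAnS, Finset.sum_insert hAnS] at happ
              have e2 : 𝒮.card + 1 - 1 = 𝒮.card := by omega
              rw [e2] at happ
              exact le_trans happ (by omega)
            · intro T hT
              rcases Finset.mem_insert.1 hT with rfl | hT𝒮
              · exact hAne
              · exact (h𝒮facts T hT𝒮).1
            · intro T hT
              rcases Finset.mem_insert.1 hT with rfl | hT𝒮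
              · exact hAW
              · exact (h𝒮facts T hT𝒮).2.1
            · rw [Finset.coe_insert]
              apply Set.Pairwise.insert hdisj𝒮
              intro T hT𝒮 hTA
              exact ⟨(h𝒮facts T hT𝒮).2.2, ((h𝒮facts T hT𝒮).2.2).symm⟩
        by_cases hZbot : ZS 𝒮 = ⊥
        · rw [hZbot, inf_bot_eq]
          simp
        · by_cases hsmall : A.card + (∑ T ∈ 𝒮, T.card) + 1 ≤ 𝒮.card * M
          · have hUZbot : U ⊓ ZS 𝒮 = ⊥ := by
              apply Submodule.finrank_eq_zero.1
              omega
            have hcUZ : c ∉ U ⊔ ZS 𝒮 := by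
              apply hcnot
              rw [hbadset]
              right
              exact ⟨A, 𝒮, rfl, hAW, h𝒮ne, h𝒮facts, hdisj𝒮, hZbot, hsmall⟩
            rw [aux_inf_bot U (ZS 𝒮) c hUZbot hcUZ]
            simp
          · push_neg at hsmall
            have hgrow := aux_finrank_grow U (ZS 𝒮) c
            omega

lemma aux_continuous_sup' {X ι : Type*} [TopologicalSpace X] (s : Finset ι) (hs : s.Nonempty)
    (g : ι → X → ℝ) (hg : ∀ i, Continuous (g i)) :
    Continuous fun x => s.sup' hs fun i => g i x := by
  induction hs using Finset.Nonempty.cons_induction with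
  | singleton i => simpa using hg i
  | cons a s ha hne ih =>
    simp only [Finset.sup'_cons (H := hne)]
    exact (hg a).max ih

/-- An `r`-tuple `D` of nonnegative integers is Tverberg prescribable for `r` and `d` if there
is an `N` such that for every continuous map `f : Δ_N → ℝ^d` there are `r` pairwise disjoint
subsets `S₁, …, S_r` of the vertex set with `|Sᵢ| = D i + 1` and points `x₁, …, x_r` of the
simplex, the support of `xᵢ` contained in `Sᵢ`, that are mapped to a common point by `f`. -/
def TverbergPrescribable (r d : ℕ) (D : Fin r → ℕ) : Prop :=
  ∃ N : ℕ, ∀ f : (stdSimplex ℝ (Fin (N + 1))) → (Fin d → ℝ), Continuous f →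
    ∃ S : Fin r → Finset (Fin (N + 1)),
      (Pairwise fun i j => Disjoint (S i) (S j)) ∧
      (∀ i, (S i).card = D i + 1) ∧
      ∃ x : Fin r → stdSimplex ℝ (Fin (N + 1)),
        (∀ i, ∀ v : Fin (N + 1), (x i : Fin (N + 1) → ℝ) v ≠ 0 → v ∈ S i) ∧
        (∀ i j, f (x i) = f (x j))

theorem prescribable_dim_lower_bound (r d : ℕ) (hr : 2 ≤ r) (hd : 1 ≤ d)
    (D : Fin r → ℕ) (h : TverbergPrescribable r d D) :
    ∀ i, (r - 1) * (d - 1) ≤ r * D i := by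
  classical
  intro i0
  by_contra hlt
  push_neg at hlt
  obtain ⟨N, hN⟩ := h
  set k := D i0 with hk
  have hd2 : 2 ≤ d := by
    by_contra hd1
    have : d = 1 := by omega
    rw [this] at hlt
    simp at hlt
  haveI : NeZero d := ⟨by omega⟩
  have harith : r * (k + 1) ≤ (r - 1) * d := by
    obtain ⟨d', rfl⟩ : ∃ d', d = d' + 1 := ⟨d - 1, by omega⟩
    have e2 : (r - 1) * (d' + 1 - 1) = (r - 1) * d' := by simp
    rw [e2] at hlt
    have e1 : (r - 1) * (d' + 1) = (r - 1) * d' + (r - 1) := by ring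
    rw [e1, Nat.mul_succ]
    generalize r * k = A at hlt ⊢
    generalize (r - 1) * d' = B at hlt ⊢
    omega
  -- N is large enough
  obtain ⟨S0, -, hS0card, -⟩ := hN (fun _ => 0) continuous_const
  have hk1N : k + 1 ≤ N + 1 := by
    have h1 := Finset.card_le_univ (S0 i0)
    rw [hS0card i0] at h1
    simpa using h1
  -- generic points
  obtain ⟨q, hq0, hqinv⟩ := aux_generic d (V := Fin (N + 1)) Finset.univ
  -- the collection of (k+1)-subsets
  set 𝒜 : Finset (Finset (Fin (N + 1))) := Finset.univ.powersetCard (k + 1) with h𝒜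
  have h𝒜ne : 𝒜.Nonempty := by
    obtain ⟨A, -, hAcard⟩ := Finset.exists_subset_card_eq
      (by simpa using hk1N : k + 1 ≤ (Finset.univ : Finset (Fin (N + 1))).card)
    exact ⟨A, Finset.mem_powersetCard.2 ⟨Finset.subset_univ _, hAcard⟩⟩
  set hfun : stdSimplex ℝ (Fin (N + 1)) → ℝ :=
    fun y => 𝒜.sup' h𝒜ne fun A => ∑ v ∈ A, (y : Fin (N + 1) → ℝ) v with hhfun
  set f : stdSimplex ℝ (Fin (N + 1)) → (Fin d → ℝ) :=
    fun y j => if j = 0 then hfun y else ∑ v, (y : Fin (N + 1) → ℝ) v * q v j with hf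
  have hfcont : Continuous f := by
    apply continuous_pi
    intro j
    rcases eq_or_ne j 0 with rfl | hj
    · simp only [hf, if_pos rfl]
      apply aux_continuous_sup'
      intro A
      exact continuous_finset_sum _ fun v _ => (continuous_apply v).comp continuous_subtype_val
    · simp only [hf, if_neg hj]
      exact continuous_finset_sum _ fun v _ =>
        ((continuous_apply v).comp continuous_subtype_val).mul continuous_const
  obtain ⟨S, hSdisj, hScard, x, hxsupp, hxeq⟩ := hN f hfcont
  -- hfun bounded by 1
  have hfun_le : ∀ y : stdSimplex ℝ (Fin (N + 1)), hfun y ≤ 1 := by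
    intro y
    apply Finset.sup'_le
    intro A hA
    calc ∑ v ∈ A, (y : Fin (N + 1) → ℝ) v ≤ ∑ v, (y : Fin (N + 1) → ℝ) v :=
          Finset.sum_le_sum_of_subset_of_nonneg (Finset.subset_univ A)
            (fun v _ _ => y.2.1 v)
      _ = 1 := y.2.2
  -- sum over S i0 is 1 for x i0
  have hsum_i0 : ∑ v ∈ S i0, (x i0 : Fin (N + 1) → ℝ) v = 1 := by
    rw [Finset.sum_subset (Finset.subset_univ (S i0))]
    · exact (x i0).2.2
    · intro v _ hv
      by_contra hne
      exact hv (hxsupp i0 v hne)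
  have hfun_i0 : hfun (x i0) = 1 := by
    apply le_antisymm (hfun_le _)
    have hmem : S i0 ∈ 𝒜 := Finset.mem_powersetCard.2 ⟨Finset.subset_univ _, hScard i0⟩
    calc (1:ℝ) = ∑ v ∈ S i0, (x i0 : Fin (N + 1) → ℝ) v := hsum_i0.symm
      _ ≤ hfun (x i0) :=
          Finset.le_sup' (fun A => ∑ v ∈ A, (x i0 : Fin (N + 1) → ℝ) v) hmem
  have hfun_all : ∀ i, hfun (x i) = 1 := by
    intro i
    have := congrFun (hxeq i i0) 0
    simp only [hf, if_pos rfl] at this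
    rw [this, hfun_i0]
  -- supports
  set T : Fin r → Finset (Fin (N + 1)) :=
    fun i => Finset.univ.filter (fun v => (x i : Fin (N + 1) → ℝ) v ≠ 0) with hT
  have hTsum : ∀ i, ∑ v ∈ T i, (x i : Fin (N + 1) → ℝ) v = 1 := by
    intro i
    rw [Finset.sum_subset (Finset.subset_univ (T i))]
    · exact (x i).2.2
    · intro v _ hv
      by_contra hne
      exact hv (by simp [hT, hne])
  have hTne : ∀ i, (T i).Nonempty := by
    intro i
    rw [Finset.nonempty_iff_ne_empty]
    intro hemp
    have := hTsum i
    rw [hemp, Finset.sum_empty] at this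
    norm_num at this
  have hTS : ∀ i, T i ⊆ S i := by
    intro i v hv
    exact hxsupp i v (by simpa [hT] using hv)
  have hTcard : ∀ i, (T i).card ≤ k + 1 := by
    intro i
    obtain ⟨A, hA𝒜, hAeq⟩ := Finset.exists_mem_eq_sup' h𝒜ne
      (fun A => ∑ v ∈ A, (x i : Fin (N + 1) → ℝ) v)
    have hAsum : ∑ v ∈ A, (x i : Fin (N + 1) → ℝ) v = 1 := by
      rw [← hAeq]
      exact hfun_all i
    have hzero : ∀ v ∈ Finset.univ \ A, (x i : Fin (N + 1) → ℝ) v = 0 := by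
      have hsd : ∑ v ∈ Finset.univ \ A, (x i : Fin (N + 1) → ℝ) v = 0 := by
        have := Finset.sum_sdiff (Finset.subset_univ A)
          (f := fun v => (x i : Fin (N + 1) → ℝ) v)
        have h2 : ∑ v, (x i : Fin (N + 1) → ℝ) v = 1 := (x i).2.2
        linarith
      intro v hv
      have := (Finset.sum_eq_zero_iff_of_nonneg
        (fun w _ => (x i).2.1 w)).1 hsd v hv
      exact this
    have hsubA : T i ⊆ A := by
      intro v hv
      by_contra hvA
      have hvs : v ∈ Finset.univ \ A := Finset.mem_sdiff.2 ⟨Finset.mem_univ v, hvA⟩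
      have := hzero v hvs
      simp [hT] at hv
      exact hv this
    calc (T i).card ≤ A.card := Finset.card_le_card hsubA
      _ = k + 1 := (Finset.mem_powersetCard.1 hA𝒜).2
  have hTinj : Function.Injective T := by
    intro i j hij
    by_contra hne
    have hdisj := hSdisj hne
    have : Disjoint (T i) (T j) := hdisj.mono (hTS i) (hTS j)
    rw [hij, Finset.disjoint_self_iff_empty] at this
    exact (hTne j).ne_empty this
  set 𝒯 : Finset (Finset (Fin (N + 1))) := Finset.univ.image T with h𝒯
  have h𝒯card : 𝒯.card = r := by
    rw [h𝒯, Finset.card_image_of_injective _ hTinj, Finset.card_univ, Fintype.card_fin]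
  have h𝒯sum : ∑ A ∈ 𝒯, A.card = ∑ i, (T i).card := by
    rw [h𝒯, Finset.sum_image (fun a _ b _ hab => hTinj hab)]
  -- apply the invariant
  have hinv := hqinv 𝒯 ?_ ?_ ?_ ?_
  · have hbound : (∑ A ∈ 𝒯, A.card) - (𝒯.card - 1) * d = 0 := by
      apply Nat.sub_eq_zero_of_le
      rw [h𝒯card, h𝒯sum]
      calc ∑ i, (T i).card ≤ ∑ _i : Fin r, (k + 1) := Finset.sum_le_sum fun i _ => hTcard i
        _ = r * (k + 1) := by rw [Finset.sum_const, Finset.card_univ, Fintype.card_fin, smul_eq_mul]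
        _ ≤ (r - 1) * d := harith
    rw [hbound, Nat.le_zero] at hinv
    have hbot : (𝒯.inf fun A => span ℝ (q '' ↑A)) = ⊥ := Submodule.finrank_eq_zero.1 hinv
    -- the common vector
    set z : Fin d → ℝ := ∑ v ∈ T i0, (x i0 : Fin (N + 1) → ℝ) v • q v with hz
    have hzi : ∀ i, (∑ v ∈ T i, (x i : Fin (N + 1) → ℝ) v • q v) = z := by
      intro i
      funext j
      have happly : ∀ i', (∑ v ∈ T i', (x i' : Fin (N + 1) → ℝ) v • q v) j
          = ∑ v ∈ T i', (x i' : Fin (N + 1) → ℝ) v * q v j := by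
        intro i'
        rw [Finset.sum_apply]
        simp [Pi.smul_apply]
      rcases eq_or_ne j 0 with rfl | hj
      · rw [hz, happly, happly]
        have e : ∀ i', ∑ v ∈ T i', (x i' : Fin (N + 1) → ℝ) v * q v 0 = 1 := by
          intro i'
          calc ∑ v ∈ T i', (x i' : Fin (N + 1) → ℝ) v * q v 0
              = ∑ v ∈ T i', (x i' : Fin (N + 1) → ℝ) v := by
                apply Finset.sum_congr rfl
                intro v _
                rw [hq0 v, mul_one]
            _ = 1 := hTsum i'
        rw [e, e]
      · have efj : ∀ i', (∑ v ∈ T i', (x i' : Fin (N + 1) → ℝ) v • q v) j = f (x i') j := by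
          intro i'
          rw [happly]
          simp only [hf, if_neg hj]
          apply Finset.sum_subset (Finset.subset_univ (T i'))
          intro v _ hv
          have : (x i' : Fin (N + 1) → ℝ) v = 0 := by
            by_contra hne
            exact hv (by simp [hT, hne])
          rw [this, zero_mul]
        rw [efj i, hz, efj i0, hxeq i i0]
    have hzmem : z ∈ 𝒯.inf fun A => span ℝ (q '' ↑A) := by
      rw [Submodule.mem_finsetInf]
      intro A hA
      obtain ⟨i, -, rfl⟩ := Finset.mem_image.1 hA
      rw [← hzi i]
      apply Submodule.sum_mem
      intro v hv
      exact Submodule.smul_mem _ _ (Submodule.subset_span ⟨v, by simpa using hv, rfl⟩)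
    rw [hbot, Submodule.mem_bot] at hzmem
    have : z 0 = 1 := by
      rw [← hzi i0, Finset.sum_apply]
      calc ∑ v ∈ T i0, ((x i0 : Fin (N + 1) → ℝ) v • q v) 0
          = ∑ v ∈ T i0, (x i0 : Fin (N + 1) → ℝ) v := by
            apply Finset.sum_congr rfl
            intro v _
            simp [Pi.smul_apply, hq0 v]
        _ = 1 := hTsum i0
    rw [hzmem] at this
    norm_num at this
  · exact ⟨T i0, Finset.mem_image_of_mem T (Finset.mem_univ i0)⟩
  · intro A hA
    obtain ⟨i, -, rfl⟩ := Finset.mem_image.1 hA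
    exact hTne i
  · intro A hA
    exact Finset.subset_univ A
  · intro A hA B hB hAB
    obtain ⟨i, -, rfl⟩ := Finset.mem_image.1 hA
    obtain ⟨j, -, rfl⟩ := Finset.mem_image.1 hB
    have hij : i ≠ j := fun hij => hAB (by rw [hij])
    exact (hSdisj hij).mono (hTS i) (hTS j)
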